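/- A disconnected graph G satisfies pt(G) = |G| − 2 if and only if PT(G) = |G| − 2, if and only if G is the disjoint union of a path on |G|−1 vertices and an isolated vertex. -/

import Mathlib

open SimpleGraph

variable {V : Type*}

/-- One simultaneous round of the color change rule: all currently forceable
vertices become black. -/
def forceStep (G : SimpleGraph V) (S : Set V) : Set V :=
  S ∪ {w | ∃ v ∈ S, G.Adj v w ∧ ∀ u, G.Adj v u → u ∉ S → u = w}

/-- The (cumulative) set of black vertices after `t` simultaneous rounds,
starting from `B`; so `B^{(t)} = propSet G B t \ propSet G B (t-1)`. -/
def propSet (G : SimpleGraph V) (B : Set V) : ℕ → Set V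
  | 0 => B
  | t + 1 => forceStep G (propSet G B t)

/-- `B` is a zero forcing set of `G`. -/
def IsZFSet (G : SimpleGraph V) (B : Set V) : Prop := ∃ t, propSet G B t = Set.univ

/-- The zero forcing number `Z(G)`. -/
noncomputable def zfNum (G : SimpleGraph V) : ℕ :=
  sInf {n | ∃ B : Set V, IsZFSet G B ∧ B.ncard = n}

/-- `B` is a minimum zero forcing set of `G`. -/
def IsMinZFSet (G : SimpleGraph V) (B : Set V) : Prop := IsZFSet G B ∧ B.ncard = zfNum G

/-- The propagation time `pt(G,B)` of a zero forcing set `B`. -/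
noncomputable def ptSet (G : SimpleGraph V) (B : Set V) : ℕ :=
  sInf {t | propSet G B t = Set.univ}

/-- The minimum propagation time `pt(G)`. -/
noncomputable def ptMin (G : SimpleGraph V) : ℕ :=
  sInf (ptSet G '' {B | IsMinZFSet G B})

/-- The maximum propagation time `PT(G)`. -/
noncomputable def ptMax (G : SimpleGraph V) : ℕ :=
  sSup (ptSet G '' {B | IsMinZFSet G B})

/-- `IsChronList G S L` : starting from black set `S`, the list `L` is a valid
chronological list of forces, performed one at a time, ending with all
vertices black. -/
def IsChronList (G : SimpleGraph V) : Set V → List (V × V) → Prop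
  | S, [] => S = Set.univ
  | S, (v, w) :: L =>
      v ∈ S ∧ w ∉ S ∧ G.Adj v w ∧ (∀ u, G.Adj v u → u ∉ S → u = w) ∧
        IsChronList G (insert w S) L

/-- `F` is a set of forces of `B`: the unordered set of forces of some
chronological list of forces of `B`. -/
def IsForceSet (G : SimpleGraph V) (B : Set V) (F : Set (V × V)) : Prop :=
  ∃ L : List (V × V), IsChronList G B L ∧ {p | p ∈ L} = F

/-- The terminus of a set of forces: the vertices performing no force. -/
def termSet (F : Set (V × V)) : Set V := {v | ∀ w, (v, w) ∉ F}

/-- The reverse set of forces. -/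
def revSet (F : Set (V × V)) : Set (V × V) := (fun p : V × V => (p.2, p.1)) '' F

/-- The (cumulative) set of black vertices after `t` rounds when propagating
using only the forces in `F`, starting from `B`;
so `F^{(t)} = fpropSet G B F t \ fpropSet G B F (t-1)`. -/
def fpropSet (G : SimpleGraph V) (B : Set V) (F : Set (V × V)) : ℕ → Set V
  | 0 => B
  | t + 1 => fpropSet G B F t ∪
      {w | ∃ v, (v, w) ∈ F ∧ v ∈ fpropSet G B F t ∧ w ∉ fpropSet G B F t ∧
        ∀ u, G.Adj v u → u ∉ fpropSet G B F t → u = w}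

/-- The propagation time `pt(G,F)` of a set of forces `F` of `B`. -/
noncomputable def ptForces (G : SimpleGraph V) (B : Set V) (F : Set (V × V)) : ℕ :=
  sInf {t | fpropSet G B F t = Set.univ}

/-- `B` is an efficient zero forcing set of `G`. -/
def IsEffZFSet (G : SimpleGraph V) (B : Set V) : Prop :=
  IsMinZFSet G B ∧ ptSet G B = ptMin G

/-- `F` is an efficient set of forces of the minimum zero forcing set `B`. -/
def IsEffForces (G : SimpleGraph V) (B : Set V) (F : Set (V × V)) : Prop :=
  IsMinZFSet G B ∧ IsForceSet G B F ∧ ptForces G B F = ptMin G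

/-- The disjoint union of two graphs. -/
def disjUnion {α β : Type*} (G1 : SimpleGraph α) (G2 : SimpleGraph β) :
    SimpleGraph (α ⊕ β) :=
  SimpleGraph.fromRel (fun x y => match x, y with
    | Sum.inl a, Sum.inl b => G1.Adj a b
    | Sum.inr a, Sum.inr b => G2.Adj a b
    | _, _ => False)

section Basics
variable {G : SimpleGraph V} {B S : Set V}

lemma subset_forceStep : S ⊆ forceStep G S := Set.subset_union_left

lemma propSet_zero : propSet G B 0 = B := rfl
lemma propSet_succ (t : ℕ) : propSet G B (t+1) = forceStep G (propSet G B t) := rfl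

lemma propSet_subset_succ (t : ℕ) : propSet G B t ⊆ propSet G B (t+1) := subset_forceStep

lemma propSet_mono {s t : ℕ} (h : s ≤ t) : propSet G B s ⊆ propSet G B t := by
  induction t with
  | zero => simp_all
  | succ t ih =>
    rcases Nat.lt_or_ge s (t+1) with h' | h'
    · exact (ih (Nat.lt_succ_iff.mp h')).trans (propSet_subset_succ t)
    · have : s = t + 1 := le_antisymm h h'
      subst this; rfl

lemma forceStep_univ : forceStep G (Set.univ : Set V) = Set.univ := by
  simp [forceStep]

lemma propSet_univ_of {t t' : ℕ} (h : propSet G B t = Set.univ) (h' : t ≤ t') :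
    propSet G B t' = Set.univ :=
  Set.eq_univ_of_univ_subset (h ▸ propSet_mono h')

lemma propSet_fixed {t : ℕ} (h : propSet G B (t+1) = propSet G B t) {s : ℕ} (hs : t ≤ s) :
    propSet G B s = propSet G B t := by
  induction s with
  | zero => simp_all
  | succ s ih =>
    rcases Nat.lt_or_ge t (s+1) with h' | h'
    · have := ih (Nat.lt_succ_iff.mp h')
      rw [propSet_succ, this, ← propSet_succ, h]
    · exact le_antisymm hs h' ▸ rfl

lemma propSet_ptSet (hB : IsZFSet G B) : propSet G B (ptSet G B) = Set.univ :=
  Nat.sInf_mem hB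

lemma propSet_ne_univ_of_lt {t : ℕ} (h : t < ptSet G B) : propSet G B t ≠ Set.univ :=
  Nat.notMem_of_lt_sInf h

lemma propSet_ssubset (hB : IsZFSet G B) {t : ℕ} (h : t < ptSet G B) :
    propSet G B t ⊂ propSet G B (t+1) := by
  refine (propSet_subset_succ t).ssubset_of_ne ?_
  intro he
  have h2 : propSet G B (ptSet G B) = propSet G B t := propSet_fixed he.symm h.le
  exact propSet_ne_univ_of_lt h (h2 ▸ propSet_ptSet hB)

lemma ncard_propSet_growth [Finite V] (hB : IsZFSet G B) {s t : ℕ} (hst : s ≤ t)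
    (ht : t ≤ ptSet G B) :
    (propSet G B s).ncard + (t - s) ≤ (propSet G B t).ncard := by
  induction t with
  | zero => simp_all
  | succ t ih =>
    rcases Nat.lt_or_ge s (t+1) with h' | h'
    · have hs : s ≤ t := Nat.lt_succ_iff.mp h'
      have h1 := ih hs (le_of_lt (Nat.lt_of_lt_of_le (Nat.lt_succ_self t) ht))
      have h2 : (propSet G B t).ncard < (propSet G B (t+1)).ncard :=
        Set.ncard_lt_ncard (propSet_ssubset hB (Nat.lt_of_lt_of_le (Nat.lt_succ_self t) ht))
          (Set.toFinite _)
      omega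
    · have : s = t + 1 := le_antisymm hst h'
      subst this; simp

lemma ptSet_add_ncard_le [Finite V] (hB : IsZFSet G B) :
    ptSet G B + B.ncard ≤ Nat.card V := by
  have h := ncard_propSet_growth hB (Nat.zero_le _) (le_refl (ptSet G B))
  rw [propSet_zero, propSet_ptSet hB] at h
  have : (Set.univ : Set V).ncard = Nat.card V := Set.ncard_univ V
  omega

end Basics

section Closure
variable {G : SimpleGraph V} {B S U : Set V}

/-- `U` is closed under adjacency. -/
def AdjClosed (G : SimpleGraph V) (U : Set V) : Prop := ∀ ⦃a b⦄, a ∈ U → G.Adj a b → b ∈ U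

lemma propSet_inter_closed (hU : AdjClosed G U) (t : ℕ) :
    propSet G B t ∩ U = propSet G (B ∩ U) t ∧ propSet G (B ∩ U) t ⊆ U := by
  induction t with
  | zero => exact ⟨rfl, Set.inter_subset_right⟩
  | succ t ih =>
    obtain ⟨ih1, ih2⟩ := ih
    constructor
    · ext w
      simp only [propSet_succ, forceStep, Set.mem_inter_iff, Set.mem_union, Set.mem_setOf_eq]
      constructor
      · rintro ⟨hw | ⟨v, hv, hadj, huniq⟩, hwU⟩
        · exact Or.inl (ih1 ▸ Set.mem_inter hw hwU)
        · by_cases hvU : v ∈ U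
          · refine Or.inr ⟨v, ih1 ▸ Set.mem_inter hv hvU, hadj, fun u hu hu' => ?_⟩
            exact huniq u hu (fun h => hu' (ih1 ▸ Set.mem_inter h (hU hvU hu)))
          · exact absurd (hU hwU hadj.symm) hvU
      · rintro (hw | ⟨v, hv, hadj, huniq⟩)
        · have hw2 : w ∈ propSet G B t ∩ U := ih1 ▸ hw
          exact ⟨Or.inl hw2.1, hw2.2⟩
        · have hvU : v ∈ U := ih2 hv
          have hv2 : v ∈ propSet G B t ∩ U := ih1 ▸ hv
          have hv' : v ∈ propSet G B t := hv2.1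
          refine ⟨Or.inr ⟨v, hv', hadj, fun u hu hu' => ?_⟩, hU hvU hadj⟩
          exact huniq u hu (fun h => hu' (ih1 ▸ h).1)
    · intro w hw
      rcases (propSet_succ t ▸ hw : w ∈ forceStep G _) with hw' | ⟨v, hv, hadj, _⟩
      · exact ih2 hw'
      · exact hU (ih2 hv) hadj

lemma zf_reachable [Finite V] (hB : IsZFSet G B) (z : V) : ∃ b ∈ B, G.Reachable b z := by
  set U : Set V := {w | ∃ b ∈ B, G.Reachable b w} with hUdef
  have hU : AdjClosed G U := by
    rintro a b ⟨c, hc, hr⟩ hadj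
    exact ⟨c, hc, hr.trans hadj.reachable⟩
  have hBU : B ∩ U = B := by
    apply Set.inter_eq_left.mpr
    intro b hb; exact ⟨b, hb, SimpleGraph.Reachable.refl b⟩
  have h := (propSet_inter_closed (B := B) hU (ptSet G B)).2
  rw [hBU] at h
  have : z ∈ propSet G B (ptSet G B) := (propSet_ptSet hB).symm ▸ Set.mem_univ z
  exact h this

end Closure

section Disc
variable {G : SimpleGraph V} {B : Set V}

lemma univ_isZF : IsZFSet G (Set.univ : Set V) := ⟨0, rfl⟩

lemma exists_minZF [Finite V] : ∃ B : Set V, IsMinZFSet G B := by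
  have hne : {n | ∃ B : Set V, IsZFSet G B ∧ B.ncard = n}.Nonempty :=
    ⟨(Set.univ : Set V).ncard, Set.univ, univ_isZF, rfl⟩
  obtain ⟨B, hB, hc⟩ := Nat.sInf_mem hne
  exact ⟨B, hB, hc⟩

lemma not_reachable_of_disc [Nonempty V] (hd : ¬ G.Connected) :
    ∃ a b : V, ¬ G.Reachable a b := by
  have h : ¬ G.Preconnected := fun h => hd ⟨h⟩
  unfold SimpleGraph.Preconnected at h
  push_neg at h
  exact h

lemma two_le_zfNum [Finite V] [Nonempty V] (hd : ¬ G.Connected) : 2 ≤ zfNum G := by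
  obtain ⟨a, b, hab⟩ := not_reachable_of_disc hd
  have h : ∀ n ∈ {n | ∃ B : Set V, IsZFSet G B ∧ B.ncard = n}, 2 ≤ n := by
    rintro n ⟨B, hB, rfl⟩
    obtain ⟨ba, hba, hra⟩ := zf_reachable hB a
    obtain ⟨bb, hbb, hrb⟩ := zf_reachable hB b
    have hne : ba ≠ bb := fun h => hab ((h ▸ hra).symm.trans hrb)
    have : ({ba, bb} : Set V) ⊆ B := by
      intro x hx; rcases hx with h | h <;> subst h <;> assumption
    calc 2 = ({ba, bb} : Set V).ncard := (Set.ncard_pair hne).symm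
    _ ≤ B.ncard := Set.ncard_le_ncard this (Set.toFinite B)
  obtain ⟨B, hB⟩ := exists_minZF (G := G)
  exact h _ ⟨B, hB.1, hB.2⟩

lemma two_le_card [Nonempty V] (hd : ¬ G.Connected) [Finite V] : 2 ≤ Nat.card V := by
  obtain ⟨a, b, hab⟩ := not_reachable_of_disc hd
  have hne : a ≠ b := fun h => hab (h ▸ SimpleGraph.Reachable.refl a)
  have := Nat.card_pos (α := V)
  rcases Nat.lt_or_ge (Nat.card V) 2 with h | h
  · have h1 : Nat.card V = 1 := by omega
    have : Subsingleton V := (Nat.card_eq_one_iff_unique.mp h1).1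
    exact absurd (Subsingleton.elim a b) hne
  · exact h

lemma ptSet_le_of_minZF [Finite V] [Nonempty V] (hd : ¬ G.Connected) (hB : IsMinZFSet G B) :
    ptSet G B + 2 ≤ Nat.card V := by
  have h1 := ptSet_add_ncard_le hB.1
  have h2 := two_le_zfNum hd (G := G)
  have h3 := hB.2
  omega

lemma ptMax_le [Finite V] [Nonempty V] (hd : ¬ G.Connected) :
    ptMax G + 2 ≤ Nat.card V := by
  have h2 := two_le_card hd (G := G)
  obtain ⟨B, hB⟩ := exists_minZF (G := G)
  have hne : (ptSet G '' {B | IsMinZFSet G B}).Nonempty := ⟨ptSet G B, B, hB, rfl⟩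
  have hb : ∀ m ∈ ptSet G '' {B | IsMinZFSet G B}, m ≤ Nat.card V - 2 := by
    rintro m ⟨C, hC, rfl⟩
    have := ptSet_le_of_minZF hd hC
    omega
  have := csSup_le hne hb
  unfold ptMax
  omega

lemma ptMin_le_ptMax [Finite V] [Nonempty V] (hd : ¬ G.Connected) : ptMin G ≤ ptMax G := by
  obtain ⟨B, hB⟩ := exists_minZF (G := G)
  have hne : (ptSet G '' {B | IsMinZFSet G B}).Nonempty := ⟨ptSet G B, B, hB, rfl⟩
  have hbdd : BddAbove (ptSet G '' {B | IsMinZFSet G B}) := by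
    refine ⟨Nat.card V, ?_⟩
    rintro m ⟨C, hC, rfl⟩
    have := ptSet_le_of_minZF hd hC
    omega
  exact csInf_le_csSup hne (OrderBot.bddBelow _) hbdd

end Disc

section Iso
variable {W : Type*} {G : SimpleGraph V} {H : SimpleGraph W}

lemma forceStep_image (e : G ≃g H) (S : Set V) :
    forceStep H (e.toEquiv '' S) = e.toEquiv '' forceStep G S := by
  ext w
  obtain ⟨w', rfl⟩ := e.toEquiv.surjective w
  simp only [forceStep, Set.mem_union, Set.mem_image, Set.mem_setOf_eq]
  constructor
  · rintro (⟨a, ha, hae⟩ | ⟨v, ⟨a, ha, rfl⟩, hadj, huniq⟩)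
    · exact ⟨w', Or.inl (e.toEquiv.injective hae ▸ ha), rfl⟩
    · refine ⟨w', Or.inr ⟨a, ha, ?_, ?_⟩, rfl⟩
      · exact e.map_adj_iff.mp hadj
      · intro u hu hu'
        have := huniq (e.toEquiv u) (e.map_adj_iff.mpr hu)
          (fun ⟨c, hc, hce⟩ => hu' (e.toEquiv.injective hce ▸ hc))
        exact e.toEquiv.injective this
  · rintro ⟨a, (ha | ⟨v, hv, hadj, huniq⟩), hae⟩
    · exact Or.inl ⟨a, ha, hae⟩
    · obtain rfl : a = w' := e.toEquiv.injective hae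
      refine Or.inr ⟨e.toEquiv v, ⟨v, hv, rfl⟩, e.map_adj_iff.mpr hadj, ?_⟩
      rintro u hu hu'
      obtain ⟨u', rfl⟩ := e.toEquiv.surjective u
      have : u' = a := huniq u' (e.map_adj_iff.mp hu) (fun h => hu' ⟨u', h, rfl⟩)
      rw [this]

lemma propSet_image (e : G ≃g H) (B : Set V) (t : ℕ) :
    propSet H (e.toEquiv '' B) t = e.toEquiv '' propSet G B t := by
  induction t with
  | zero => rfl
  | succ t ih => rw [propSet_succ, ih, forceStep_image e, propSet_succ]

lemma image_eq_univ_iff (e : G ≃g H) (S : Set V) :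
    e.toEquiv '' S = Set.univ ↔ S = Set.univ := by
  have h : ⇑e.toEquiv '' Set.univ = Set.univ := by
    rw [Set.image_univ, Equiv.range_eq_univ]
  rw [← h, Set.image_eq_image e.toEquiv.injective]

lemma isZF_image (e : G ≃g H) {B : Set V} : IsZFSet H (e.toEquiv '' B) ↔ IsZFSet G B := by
  unfold IsZFSet
  constructor <;> rintro ⟨t, ht⟩ <;> refine ⟨t, ?_⟩
  · exact (image_eq_univ_iff e _).mp (by rw [propSet_image e] at ht; exact ht)
  · rw [propSet_image e]; exact (image_eq_univ_iff e _).mpr ht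

lemma ptSet_image (e : G ≃g H) (B : Set V) : ptSet H (e.toEquiv '' B) = ptSet G B := by
  unfold ptSet
  congr 1
  ext t
  simp only [Set.mem_setOf_eq, propSet_image e]
  exact image_eq_univ_iff e _

lemma zfNum_eq (e : G ≃g H) : zfNum H = zfNum G := by
  unfold zfNum
  congr 1
  ext n
  simp only [Set.mem_setOf_eq]
  constructor
  · rintro ⟨B, hB, rfl⟩
    have himg : ⇑e.toEquiv '' (⇑e.toEquiv ⁻¹' B) = B := Equiv.image_preimage _ B
    refine ⟨e.toEquiv ⁻¹' B, ?_, ?_⟩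
    · rw [← isZF_image e, himg]; exact hB
    · conv_rhs => rw [← himg]
      exact (Set.ncard_image_of_injective _ e.toEquiv.injective).symm
  · rintro ⟨B, hB, rfl⟩
    exact ⟨e.toEquiv '' B, (isZF_image e).mpr hB,
      Set.ncard_image_of_injective _ e.toEquiv.injective⟩

lemma minZF_image (e : G ≃g H) {B : Set V} : IsMinZFSet H (e.toEquiv '' B) ↔ IsMinZFSet G B := by
  unfold IsMinZFSet
  rw [isZF_image e, zfNum_eq e, Set.ncard_image_of_injective _ e.toEquiv.injective]

lemma ptSet_image_minZF (e : G ≃g H) :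
    ptSet H '' {B | IsMinZFSet H B} = ptSet G '' {B | IsMinZFSet G B} := by
  ext n
  simp only [Set.mem_image, Set.mem_setOf_eq]
  constructor
  · rintro ⟨B, hB, rfl⟩
    have himg : ⇑e.toEquiv '' (⇑e.toEquiv ⁻¹' B) = B := Equiv.image_preimage _ B
    refine ⟨e.toEquiv ⁻¹' B, ?_, ?_⟩
    · rw [← minZF_image e, himg]; exact hB
    · rw [← ptSet_image e, himg]
  · rintro ⟨B, hB, rfl⟩
    exact ⟨e.toEquiv '' B, (minZF_image e).mpr hB, ptSet_image e B⟩

lemma ptMin_eq (e : G ≃g H) : ptMin H = ptMin G := by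
  unfold ptMin; rw [ptSet_image_minZF e]

lemma ptMax_eq (e : G ≃g H) : ptMax H = ptMax G := by
  unfold ptMax; rw [ptSet_image_minZF e]

end Iso

section Walks
variable {G : SimpleGraph V} {U : Set V}

lemma walk_closed (hU : AdjClosed G U) :
    ∀ {a b : V}, G.Walk a b → a ∈ U → b ∈ U := by
  intro a b w
  induction w with
  | nil => exact id
  | cons h p ih => exact fun ha => ih (hU ha h)

lemma reachable_closed (hU : AdjClosed G U) {a b : V} (hr : G.Reachable a b) (ha : a ∈ U) :
    b ∈ U := by
  obtain ⟨w⟩ := hr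
  exact walk_closed hU w ha

end Walks

section Concrete

open Sum

variable {k : ℕ}

/-- Abbreviation for the model graph. -/
noncomputable abbrev modelG (k : ℕ) : SimpleGraph (Fin (k+1) ⊕ Fin 1) :=
  disjUnion (SimpleGraph.pathGraph (k+1)) (SimpleGraph.pathGraph 1)

lemma modelG_adj_inl_inl {i j : Fin (k+1)} :
    (modelG k).Adj (inl i) (inl j) ↔ (i.val + 1 = j.val ∨ j.val + 1 = i.val) := by
  simp only [modelG, disjUnion, SimpleGraph.fromRel_adj, SimpleGraph.pathGraph_adj]
  constructor
  · rintro ⟨-, h | h⟩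
    · exact h
    · exact h.symm
  · intro h
    refine ⟨?_, Or.inl h⟩
    intro he
    have : i = j := Sum.inl.inj he
    subst this
    omega

lemma modelG_not_adj_inl_inr {i : Fin (k+1)} {j : Fin 1} :
    ¬ (modelG k).Adj (inl i) (inr j) := by
  simp only [modelG, disjUnion, SimpleGraph.fromRel_adj]
  rintro ⟨-, h | h⟩ <;> exact h

lemma modelG_not_adj_inr {j : Fin 1} {x : Fin (k+1) ⊕ Fin 1} :
    ¬ (modelG k).Adj (inr j) x := by
  intro h
  cases x with
  | inl i => exact modelG_not_adj_inl_inr h.symm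
  | inr j' =>
    have := h.ne
    simp only [modelG, disjUnion, SimpleGraph.fromRel_adj, SimpleGraph.pathGraph_adj] at h
    obtain ⟨hne, h | h⟩ := h <;> omega

lemma modelG_adj_cases {x y : Fin (k+1) ⊕ Fin 1} (h : (modelG k).Adj x y) :
    ∃ i j : Fin (k+1), x = inl i ∧ y = inl j ∧ (i.val + 1 = j.val ∨ j.val + 1 = i.val) := by
  cases x with
  | inr j => exact absurd h modelG_not_adj_inr
  | inl i =>
    cases y with
    | inr j => exact absurd h modelG_not_adj_inl_inr
    | inl j => exact ⟨i, j, rfl, rfl, modelG_adj_inl_inl.mp h⟩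

lemma modelG_inl_closed : AdjClosed (modelG k) (Set.range (inl : Fin (k+1) → _)) := by
  rintro a b ⟨i, rfl⟩ hadj
  obtain ⟨i', j', h1, h2, -⟩ := modelG_adj_cases hadj
  exact ⟨j', h2.symm⟩

lemma modelG_not_connected : ¬ (modelG k).Connected := by
  intro hc
  have hr : (modelG k).Reachable (inl 0) (inr 0) := hc.preconnected _ _
  have := reachable_closed modelG_inl_closed hr ⟨0, rfl⟩
  obtain ⟨i, hi⟩ := this
  exact absurd hi Sum.inl_ne_inr

/-- The canonical minimum zero forcing set. -/
def modelB (k : ℕ) : Set (Fin (k+1) ⊕ Fin 1) := {inl 0, inr 0}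

lemma modelB_ncard : (modelB k).ncard = 2 :=
  Set.ncard_pair (by simp)

lemma modelG_propSet (t : ℕ) :
    propSet (modelG k) (modelB k) t
      = {x | x = inr 0 ∨ ∃ i : Fin (k+1), x = inl i ∧ i.val ≤ t} := by
  induction t with
  | zero =>
    ext x
    simp only [propSet_zero, modelB, Set.mem_insert_iff, Set.mem_singleton_iff, Set.mem_setOf_eq]
    constructor
    · rintro (rfl | rfl)
      · exact Or.inr ⟨0, rfl, Nat.zero_le _⟩
      · exact Or.inl rfl
    · rintro (rfl | ⟨i, rfl, hi⟩)
      · exact Or.inr rfl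
      · refine Or.inl ?_
        have : i = 0 := Fin.ext (by simpa using Nat.le_zero.mp hi)
        rw [this]
  | succ t ih =>
    rw [propSet_succ, ih]
    ext x
    simp only [forceStep, Set.mem_union, Set.mem_setOf_eq]
    constructor
    · rintro (hx | ⟨v, hv, hadj, -⟩)
      · rcases hx with rfl | ⟨i, rfl, hi⟩
        · exact Or.inl rfl
        · exact Or.inr ⟨i, rfl, hi.trans (Nat.le_succ t)⟩
      · obtain ⟨i, j, rfl, rfl, hij⟩ := modelG_adj_cases hadj
        rcases hv with hv | ⟨i', hi', hle⟩
        · exact absurd hv Sum.inl_ne_inr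
        · obtain rfl : i = i' := Sum.inl.inj hi'
          refine Or.inr ⟨j, rfl, ?_⟩
          omega
    · rintro (rfl | ⟨j, rfl, hj⟩)
      · exact Or.inl (Or.inl rfl)
      · rcases Nat.lt_or_ge j.val (t+1) with h | h
        · exact Or.inl (Or.inr ⟨j, rfl, Nat.lt_succ_iff.mp h⟩)
        · -- j.val = t+1, so t + 1 ≤ k
          have hjv : j.val = t + 1 := le_antisymm hj h
          have htk : t < k := by have := j.isLt; omega
          refine Or.inr ⟨inl ⟨t, by omega⟩, Or.inr ⟨⟨t, by omega⟩, rfl, le_refl t⟩, ?_, ?_⟩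
          · rw [modelG_adj_inl_inl]
            left; simp [hjv]
          · intro u hadj hu
            obtain ⟨i', j', hi', rfl, hij⟩ := modelG_adj_cases hadj
            obtain rfl : (⟨t, by omega⟩ : Fin (k+1)) = i' := Sum.inl.inj hi'
            have hj' : ¬ j'.val ≤ t := by
              intro hle
              exact hu (Or.inr ⟨j', rfl, hle⟩)
            have hval : j'.val = t + 1 := by
              simp only [] at hij
              omega
            congr 1
            exact Fin.ext (by rw [hval, hjv])

lemma modelG_propSet_k : propSet (modelG k) (modelB k) k = Set.univ := by
  rw [modelG_propSet]
  ext x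
  simp only [Set.mem_setOf_eq, Set.mem_univ, iff_true]
  cases x with
  | inl i => exact Or.inr ⟨i, rfl, Nat.lt_succ_iff.mp i.isLt⟩
  | inr j => exact Or.inl (by rw [Subsingleton.elim j 0])

lemma modelG_propSet_ne (t : ℕ) (ht : t < k) :
    propSet (modelG k) (modelB k) t ≠ Set.univ := by
  rw [modelG_propSet]
  intro h
  have : (inl (Fin.last k) : Fin (k+1) ⊕ Fin 1) ∈ {x | x = inr 0 ∨
      ∃ i : Fin (k+1), x = inl i ∧ i.val ≤ t} := h ▸ Set.mem_univ _
  rcases this with h' | ⟨i, hi, hle⟩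
  · exact absurd h' Sum.inl_ne_inr
  · have := Sum.inl.inj hi
    rw [← this] at hle
    simp [Fin.last] at hle
    omega

lemma modelB_isZF : IsZFSet (modelG k) (modelB k) := ⟨k, modelG_propSet_k⟩

lemma modelB_ptSet : ptSet (modelG k) (modelB k) = k := by
  apply le_antisymm
  · exact Nat.sInf_le modelG_propSet_k
  · by_contra h
    push_neg at h
    exact modelG_propSet_ne _ h (propSet_ptSet modelB_isZF)

lemma modelG_zfNum : zfNum (modelG k) = 2 := by
  apply le_antisymm
  · exact Nat.sInf_le ⟨modelB k, modelB_isZF, modelB_ncard⟩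
  · exact two_le_zfNum modelG_not_connected

end Concrete

section Concrete2

open Sum

variable {k : ℕ}

lemma modelB_isMinZF : IsMinZFSet (modelG k) (modelB k) :=
  ⟨modelB_isZF, by rw [modelB_ncard, modelG_zfNum]⟩

lemma modelG_minZF_shape {B : Set (Fin (k+1) ⊕ Fin 1)} (hB : IsMinZFSet (modelG k) B) :
    ∃ a : Fin (k+1), B = {inl a, inr 0} := by
  have hc2 : B.ncard = 2 := by rw [hB.2, modelG_zfNum]
  obtain ⟨x, y, hxy, rfl⟩ := Set.ncard_eq_two.mp hc2
  -- inr 0 ∈ B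
  have hclosed : AdjClosed (modelG k) ({inr 0} : Set (Fin (k+1) ⊕ Fin 1)) := by
    rintro a b rfl hadj
    exact absurd hadj modelG_not_adj_inr
  obtain ⟨b, hb, hrb⟩ := zf_reachable hB.1 (inr 0 : Fin (k+1) ⊕ Fin 1)
  have hbeq : b = inr 0 := reachable_closed hclosed hrb.symm rfl
  rw [hbeq] at hb
  rcases hb with rfl | rfl
  · -- x = inr 0, so y must be inl
    cases y with
    | inl a => exact ⟨a, by rw [Set.pair_comm]⟩
    | inr j =>
      exact absurd (by rw [Subsingleton.elim j 0] : (inr j : Fin (k+1) ⊕ Fin 1) = inr 0)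
        (Ne.symm hxy)
  · -- y = inr 0
    cases x with
    | inl a => exact ⟨a, rfl⟩
    | inr j =>
      exact absurd (by rw [Subsingleton.elim j 0] : (inr j : Fin (k+1) ⊕ Fin 1) = inr 0) hxy

lemma modelG_forceStep_interior {a : Fin (k+1)} (h0 : 0 < a.val) (hk : a.val < k) :
    forceStep (modelG k) ({inl a} : Set (Fin (k+1) ⊕ Fin 1)) = {inl a} := by
  apply Set.union_eq_self_of_subset_right
  rintro w ⟨v, hv, hadj, huniq⟩
  rw [Set.mem_singleton_iff] at hv
  subst hv
  have hlt : a.val - 1 < k + 1 := by omega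
  have hlt2 : a.val + 1 < k + 1 := by omega
  have h1 : (modelG k).Adj (inl a) (inl ⟨a.val - 1, hlt⟩) := by
    rw [modelG_adj_inl_inl]; right; simp; omega
  have h2 : (modelG k).Adj (inl a) (inl ⟨a.val + 1, hlt2⟩) := by
    rw [modelG_adj_inl_inl]; left; simp
  have e1 := huniq _ h1 (by simp [Fin.ext_iff]; omega)
  have e2 := huniq _ h2 (by simp [Fin.ext_iff])
  rw [← e1] at e2
  have := Sum.inl.inj e2
  rw [Fin.ext_iff] at this
  simp at this
  omega

lemma modelG_minZF_endpoint {a : Fin (k+1)}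
    (hB : IsMinZFSet (modelG k) ({inl a, inr 0} : Set (Fin (k+1) ⊕ Fin 1))) :
    a.val = 0 ∨ a.val = k := by
  by_contra h
  push_neg at h
  obtain ⟨h0, hk⟩ := h
  have h0' : 0 < a.val := Nat.pos_of_ne_zero h0
  have hk' : a.val < k := lt_of_le_of_ne (Nat.lt_succ_iff.mp a.isLt) hk
  set B : Set (Fin (k+1) ⊕ Fin 1) := {inl a, inr 0}
  have hBU : B ∩ Set.range (inl : Fin (k+1) → _) = {inl a} := by
    ext x
    simp only [B, Set.mem_inter_iff, Set.mem_insert_iff, Set.mem_singleton_iff, Set.mem_range]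
    constructor
    · rintro ⟨rfl | rfl, i, hi⟩
      · rfl
      · exact absurd hi Sum.inl_ne_inr
    · rintro rfl; exact ⟨Or.inl rfl, a, rfl⟩
  have hfix : ∀ t, propSet (modelG k) ({inl a} : Set (Fin (k+1) ⊕ Fin 1)) t = {inl a} := by
    intro t
    have := propSet_fixed (G := modelG k) (B := ({inl a} : Set (Fin (k+1) ⊕ Fin 1))) (t := 0)
      (by rw [propSet_succ, propSet_zero, modelG_forceStep_interior h0' hk'])
      (Nat.zero_le t)
    rw [this, propSet_zero]
  have hT := propSet_ptSet hB.1
  have hint := (propSet_inter_closed (B := B) modelG_inl_closed (ptSet (modelG k) B)).1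
  rw [hT, hBU, hfix, Set.univ_inter] at hint
  have : (inl 0 : Fin (k+1) ⊕ Fin 1) ∈ Set.range (inl : Fin (k+1) → _) := ⟨0, rfl⟩
  rw [hint, Set.mem_singleton_iff] at this
  have := Sum.inl.inj this
  rw [Fin.ext_iff] at this
  simp at this
  omega

def revFin (k : ℕ) : Fin (k+1) ≃ Fin (k+1) where
  toFun i := ⟨k - i.val, by omega⟩
  invFun i := ⟨k - i.val, by omega⟩
  left_inv i := Fin.ext (by have := i.isLt; simp; omega)
  right_inv i := Fin.ext (by have := i.isLt; simp; omega)

def revIso (k : ℕ) : modelG k ≃g modelG k where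
  toEquiv := Equiv.sumCongr (revFin k) (Equiv.refl (Fin 1))
  map_rel_iff' := by
    intro x y
    cases x with
    | inl i =>
      cases y with
      | inl j =>
        simp only [Equiv.sumCongr_apply, Sum.map_inl]
        rw [modelG_adj_inl_inl, modelG_adj_inl_inl]
        have hi := i.isLt; have hj := j.isLt
        show (k - i.val) + 1 = (k - j.val) ∨ (k - j.val) + 1 = (k - i.val) ↔ _
        omega
      | inr j =>
        simp only [Equiv.sumCongr_apply, Sum.map_inl, Sum.map_inr]
        exact iff_of_false modelG_not_adj_inl_inr modelG_not_adj_inl_inr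
    | inr i =>
      simp only [Equiv.sumCongr_apply, Sum.map_inr]
      exact iff_of_false modelG_not_adj_inr modelG_not_adj_inr

lemma modelG_ptSet_last :
    ptSet (modelG k) ({inl (Fin.last k), inr 0} : Set (Fin (k+1) ⊕ Fin 1)) = k := by
  have himg : (revIso k).toEquiv '' (modelB k) = {inl (Fin.last k), inr 0} := by
    have h0 : (revIso k).toEquiv (inl (0 : Fin (k+1))) = inl (Fin.last k) := by
      show inl (revFin k 0) = inl (Fin.last k)
      congr 1
    have h1 : (revIso k).toEquiv (inr (0 : Fin 1)) = inr 0 := rfl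
    rw [modelB, Set.image_pair, h0, h1]
  rw [← himg, ptSet_image (revIso k), modelB_ptSet]

lemma modelG_minZF_ptSet {B : Set (Fin (k+1) ⊕ Fin 1)} (hB : IsMinZFSet (modelG k) B) :
    ptSet (modelG k) B = k := by
  obtain ⟨a, rfl⟩ := modelG_minZF_shape hB
  rcases modelG_minZF_endpoint hB with h | h
  · have : a = 0 := Fin.ext (by simpa using h)
    subst this
    exact modelB_ptSet
  · have : a = Fin.last k := Fin.ext (by simpa [Fin.last] using h)
    subst this
    exact modelG_ptSet_last

lemma modelG_ptImage :
    ptSet (modelG k) '' {B | IsMinZFSet (modelG k) B} = {k} := by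
  ext m
  simp only [Set.mem_image, Set.mem_setOf_eq, Set.mem_singleton_iff]
  constructor
  · rintro ⟨B, hB, rfl⟩
    exact modelG_minZF_ptSet hB
  · rintro rfl
    exact ⟨modelB _, modelB_isMinZF, modelB_ptSet⟩

lemma modelG_ptMin : ptMin (modelG k) = k := by
  unfold ptMin; rw [modelG_ptImage, csInf_singleton]

lemma modelG_ptMax : ptMax (modelG k) = k := by
  unfold ptMax; rw [modelG_ptImage, csSup_singleton]

end Concrete2

section Main

open Sum

variable {G : SimpleGraph V}

lemma exists_new_in_closed [Finite V] {B U : Set V} (hU : AdjClosed G U) (hB : IsZFSet G B)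
    {t : ℕ} (h : propSet G B t ∩ U ≠ U) :
    ∃ w ∈ U, w ∈ propSet G B (t+1) ∧ w ∉ propSet G B t := by
  have h1 := (propSet_inter_closed (B := B) hU t).1
  have h2 := (propSet_inter_closed (B := B) hU (t+1)).1
  by_contra hno
  push_neg at hno
  have heq : propSet G (B ∩ U) (t+1) = propSet G (B ∩ U) t := by
    rw [← h1, ← h2]
    ext z
    constructor
    · rintro ⟨hz1, hz2⟩
      exact ⟨hno z hz2 hz1, hz2⟩
    · rintro ⟨hz1, hz2⟩
      exact ⟨propSet_subset_succ t hz1, hz2⟩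
  have hT : propSet G B (ptSet G B) = Set.univ := propSet_ptSet hB
  have hfin := (propSet_inter_closed (B := B) hU (max (ptSet G B) t)).1
  rw [propSet_univ_of hT (le_max_left _ _), Set.univ_inter] at hfin
  rw [propSet_fixed heq (le_max_right _ _), ← h1] at hfin
  exact h hfin.symm

lemma build_iso [Finite V] {x y : V} {k : ℕ} (hxy : x ≠ y)
    (hmin : IsMinZFSet G {x, y}) (hpt : ptSet G {x, y} = k)
    (hn : Nat.card V = k + 2) (hy : ∀ z, ¬ G.Adj y z) :
    Nonempty (G ≃g modelG k) := by
  classical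
  set B : Set V := {x, y} with hB
  have hBc : B.ncard = 2 := Set.ncard_pair hxy
  have hyB : y ∈ B := Or.inr rfl
  have hxB : x ∈ B := Or.inl rfl
  have hzf : IsZFSet G B := hmin.1
  have hunivk : propSet G B k = Set.univ := hpt ▸ propSet_ptSet hzf
  have hcardU : (Set.univ : Set V).ncard = k + 2 := by rw [Set.ncard_univ]; exact hn
  have hcard : ∀ t ≤ k, (propSet G B t).ncard = t + 2 := by
    intro t ht
    have hlow := ncard_propSet_growth hzf (Nat.zero_le t) (hpt ▸ ht)
    rw [propSet_zero, hBc] at hlow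
    have hup := ncard_propSet_growth hzf ht (hpt ▸ le_refl k)
    rw [hunivk, hcardU] at hup
    omega
  have hdiff : ∀ t < k, ∃ a, propSet G B (t+1) \ propSet G B t = {a} := by
    intro t ht
    apply Set.ncard_eq_one.mp
    rw [Set.ncard_diff (propSet_subset_succ t) (Set.toFinite _),
      hcard t (le_of_lt ht), hcard (t+1) ht]
    omega
  set w : ℕ → V := fun t =>
    if h : (propSet G B t \ propSet G B (t-1)).Nonempty then h.some else x with hwdef
  have hw0 : w 0 = x := by
    rw [hwdef]
    simp only []
    rw [dif_neg]
    simp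
  have hwsucc : ∀ t < k, propSet G B (t+1) \ propSet G B t = {w (t+1)} := by
    intro t ht
    obtain ⟨a, ha⟩ := hdiff t ht
    have hne : (propSet G B (t+1) \ propSet G B (t+1-1)).Nonempty := by
      rw [Nat.add_sub_cancel, ha]; exact Set.singleton_nonempty a
    have : w (t+1) = a := by
      rw [hwdef]
      simp only []
      rw [dif_pos hne]
      have h2 : hne.some ∈ propSet G B (t + 1) \ propSet G B t := hne.some_mem
      rw [ha] at h2
      exact h2
    rw [this, ha]
  have hwnew : ∀ t < k, w (t+1) ∉ propSet G B t := by
    intro t ht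
    have := hwsucc t ht
    have : w (t+1) ∈ propSet G B (t+1) \ propSet G B t := this ▸ rfl
    exact this.2
  have hwmem : ∀ t < k, w (t+1) ∈ propSet G B (t+1) := by
    intro t ht
    have : w (t+1) ∈ propSet G B (t+1) \ propSet G B t := (hwsucc t ht) ▸ rfl
    exact this.1
  have hstep : ∀ t < k, propSet G B (t+1) = insert (w (t+1)) (propSet G B t) := by
    intro t ht
    ext z
    constructor
    · intro hz
      by_cases hz' : z ∈ propSet G B t
      · exact Set.mem_insert_of_mem _ hz'
      · have : z ∈ propSet G B (t+1) \ propSet G B t := ⟨hz, hz'⟩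
        rw [hwsucc t ht] at this
        exact Set.mem_insert_iff.mpr (Or.inl this)
    · rintro (rfl | hz)
      · exact hwmem t ht
      · exact propSet_subset_succ t hz
  -- the big invariant
  have hInv : ∀ t, t ≤ k →
      (propSet G B t = insert y (w '' Set.Iic t)) ∧
      (∀ i ≤ t, ∀ j ≤ t, w i = w j → i = j) ∧
      (∀ i ≤ t, ∀ j ≤ t, (G.Adj (w i) (w j) ↔ (i + 1 = j ∨ j + 1 = i))) ∧
      (∀ i < t, ∀ u, G.Adj (w i) u → u ∈ propSet G B t) ∧
      (∀ i ≤ t, w i ≠ y) := by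
    intro t
    induction t with
    | zero =>
      intro _
      have hIic : (Set.Iic 0 : Set ℕ) = {0} := by
        ext i; simp [Nat.le_zero]
      refine ⟨?_, ?_, ?_, ?_, ?_⟩
      · rw [propSet_zero, hIic, Set.image_singleton, hw0, hB, Set.pair_comm]
      · intro i hi j hj _
        rw [Nat.le_zero.mp hi, Nat.le_zero.mp hj]
      · intro i hi j hj
        rw [Nat.le_zero.mp hi, Nat.le_zero.mp hj]
        constructor
        · intro h; exact absurd h (G.irrefl)
        · intro h; omega
      · intro i hi; omega
      · intro i hi
        rw [Nat.le_zero.mp hi, hw0]; exact hxy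
    | succ t ih =>
      intro ht1
      have htk : t < k := ht1
      obtain ⟨ih1, ih2, ih3, ih4, ih5⟩ := ih (le_of_lt htk)
      have hnew := hwnew t htk
      -- the forcing vertex is w t
      have hforce : G.Adj (w t) (w (t+1)) ∧
          ∀ u, G.Adj (w t) u → u ∉ propSet G B t → u = w (t+1) := by
        have hmem := hwmem t htk
        rw [propSet_succ] at hmem
        rcases hmem with hmem | ⟨v, hv, hadj, huniq⟩
        · exact absurd hmem hnew
        · -- v ∈ propSet t = insert y (w '' Iic t)
          rw [ih1] at hv
          rcases hv with rfl | ⟨i, hi, rfl⟩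
          · exact absurd hadj (hy _)
          · rcases Nat.lt_or_ge i t with hit | hit
            · exact absurd (ih4 i hit _ hadj) hnew
            · have : i = t := le_antisymm hi hit
              subst this
              exact ⟨hadj, huniq⟩
      have hIic : (Set.Iic (t+1) : Set ℕ) = insert (t+1) (Set.Iic t) := by
        ext i; simp only [Set.mem_Iic, Set.mem_insert_iff]; omega
      refine ⟨?_, ?_, ?_, ?_, ?_⟩
      · rw [hstep t htk, ih1, hIic, Set.image_insert_eq, Set.insert_comm]
      · intro i hi j hj hij
        rcases Nat.lt_or_ge i (t+1) with hi' | hi' <;> rcases Nat.lt_or_ge j (t+1) with hj' | hj'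
        · exact ih2 i (Nat.lt_succ_iff.mp hi') j (Nat.lt_succ_iff.mp hj') hij
        · have hjeq : j = t + 1 := le_antisymm hj hj'
          have hmem : w i ∈ w '' Set.Iic t :=
            Set.mem_image_of_mem w (Nat.lt_succ_iff.mp hi' : i ∈ Set.Iic t)
          have hcon : w (t+1) ∈ propSet G B t := by
            rw [ih1]
            exact Set.mem_insert_of_mem y ((hjeq ▸ hij : w i = w (t+1)) ▸ hmem)
          exact absurd hcon hnew
        · have hieq : i = t + 1 := le_antisymm hi hi'
          have hmem : w j ∈ w '' Set.Iic t :=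
            Set.mem_image_of_mem w (Nat.lt_succ_iff.mp hj' : j ∈ Set.Iic t)
          have hcon : w (t+1) ∈ propSet G B t := by
            rw [ih1]
            exact Set.mem_insert_of_mem y ((hieq ▸ hij.symm : w j = w (t+1)) ▸ hmem)
          exact absurd hcon hnew
        · omega
      · intro i hi j hj
        rcases Nat.lt_or_ge i (t+1) with hi' | hi' <;> rcases Nat.lt_or_ge j (t+1) with hj' | hj'
        · exact ih3 i (Nat.lt_succ_iff.mp hi') j (Nat.lt_succ_iff.mp hj')
        · have hjeq : j = t + 1 := le_antisymm hj hj'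
          have hi'' : i ≤ t := Nat.lt_succ_iff.mp hi'
          rw [hjeq]
          constructor
          · intro hadj
            rcases Nat.lt_or_ge i t with hit | hit
            · exact absurd (ih4 i hit _ hadj) hnew
            · have : i = t := le_antisymm hi'' hit
              omega
          · rintro (h | h)
            · have : i = t := by omega
              rw [this]
              exact hforce.1
            · omega
        · have hieq : i = t + 1 := le_antisymm hi hi'
          have hj'' : j ≤ t := Nat.lt_succ_iff.mp hj'
          rw [hieq]
          constructor
          · intro hadj
            rcases Nat.lt_or_ge j t with hjt | hjt
            · exact absurd (ih4 j hjt _ hadj.symm) hnew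
            · have : j = t := le_antisymm hj'' hjt
              omega
          · rintro (h | h)
            · omega
            · have : j = t := by omega
              rw [this]
              exact hforce.1.symm
        · have hieq : i = t + 1 := le_antisymm hi hi'
          have hjeq : j = t + 1 := le_antisymm hj hj'
          rw [hieq, hjeq]
          constructor
          · intro h; exact absurd h (G.irrefl)
          · intro h; omega
      · intro i hi u hadj
        rcases Nat.lt_or_ge i t with hit | hit
        · exact propSet_subset_succ t (ih4 i hit u hadj)
        · have hieq : i = t := le_antisymm (Nat.lt_succ_iff.mp hi) hit
          rw [hieq] at hadj
          by_cases hu : u ∈ propSet G B t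
          · exact propSet_subset_succ t hu
          · rw [hforce.2 u hadj hu]
            exact hwmem t htk
      · intro i hi
        rcases Nat.lt_or_ge i (t+1) with hi' | hi'
        · exact ih5 i (Nat.lt_succ_iff.mp hi')
        · have hieq : i = t + 1 := le_antisymm hi hi'
          rw [hieq]
          intro heq
          exact hnew (heq ▸ (propSet_mono (Nat.zero_le t) hyB : y ∈ propSet G B t))
  obtain ⟨inv1, inv2, inv3, inv4, inv5⟩ := hInv k (le_refl k)
  -- build the bijection
  set g : Fin (k+1) ⊕ Fin 1 → V := Sum.elim (fun i => w i.val) (fun _ => y) with hg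
  have hginj : Function.Injective g := by
    rintro (i | i) (j | j) hij
    · simp only [hg, Sum.elim_inl] at hij
      exact congrArg inl (Fin.ext (inv2 i.val (Nat.lt_succ_iff.mp i.isLt)
        j.val (Nat.lt_succ_iff.mp j.isLt) hij))
    · exact absurd hij (inv5 i.val (Nat.lt_succ_iff.mp i.isLt))
    · exact absurd hij.symm (inv5 j.val (Nat.lt_succ_iff.mp j.isLt))
    · rw [Subsingleton.elim i j]
  have hgsurj : Function.Surjective g := by
    intro z
    have : z ∈ propSet G B k := hunivk ▸ Set.mem_univ z
    rw [inv1] at this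
    rcases this with rfl | ⟨i, hi, rfl⟩
    · exact ⟨inr 0, rfl⟩
    · exact ⟨inl ⟨i, Nat.lt_succ_iff.mpr hi⟩, rfl⟩
  have hadj_iff : ∀ a b, G.Adj (g a) (g b) ↔ (modelG k).Adj a b := by
    rintro (i | i) (j | j)
    · simp only [hg, Sum.elim_inl]
      rw [inv3 i.val (Nat.lt_succ_iff.mp i.isLt) j.val (Nat.lt_succ_iff.mp j.isLt),
        modelG_adj_inl_inl]
    · simp only [hg, Sum.elim_inl, Sum.elim_inr]
      exact iff_of_false (fun h => hy _ h.symm) modelG_not_adj_inl_inr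
    · simp only [hg, Sum.elim_inl, Sum.elim_inr]
      exact iff_of_false (fun h => hy _ h) modelG_not_adj_inr
    · simp only [hg, Sum.elim_inr]
      exact iff_of_false (fun h => hy _ h) modelG_not_adj_inr
  refine ⟨SimpleGraph.Iso.symm ⟨Equiv.ofBijective g ⟨hginj, hgsurj⟩, ?_⟩⟩
  exact fun {a b} => hadj_iff a b

end Main

section Main2
variable {G : SimpleGraph V}

lemma main23 [Finite V] [Nonempty V] (hd : ¬ G.Connected)
    (h2 : ptMax G + 2 = Nat.card V) :
    ∃ k : ℕ, Nat.card V = k + 2 ∧ Nonempty (G ≃g modelG k) := by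
  classical
  have hn2 : 2 ≤ Nat.card V := two_le_card hd
  set n := Nat.card V with hndef
  set k := n - 2 with hkdef
  have hkn : n = k + 2 := by omega
  refine ⟨k, hkn, ?_⟩
  -- obtain a min ZF set attaining ptMax
  obtain ⟨B0, hB0min⟩ := exists_minZF (G := G)
  have hne : (ptSet G '' {B | IsMinZFSet G B}).Nonempty := ⟨ptSet G B0, B0, hB0min, rfl⟩
  have hbdd : BddAbove (ptSet G '' {B | IsMinZFSet G B}) := by
    refine ⟨n, ?_⟩
    rintro m ⟨C, hC, rfl⟩
    have := ptSet_le_of_minZF hd hC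
    omega
  obtain ⟨B, hBmin, hBpt⟩ := Nat.sSup_mem hne hbdd
  have hBptk : ptSet G B = k := by
    have : sSup (ptSet G '' {B | IsMinZFSet G B}) = ptMax G := rfl
    rw [this] at hBpt
    omega
  -- B has exactly two elements
  have hBc : B.ncard = 2 := by
    have h1 := ptSet_add_ncard_le hBmin.1
    have h3 := hBmin.2
    have h4 := two_le_zfNum hd (G := G)
    omega
  obtain ⟨x, y, hxy, rfl⟩ := Set.ncard_eq_two.mp hBc
  have hreach : ∀ z, G.Reachable x z ∨ G.Reachable y z := by
    intro z
    obtain ⟨b, hb, hr⟩ := zf_reachable hBmin.1 z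
    rcases hb with rfl | rfl
    · exact Or.inl hr
    · exact Or.inr hr
  have hnxy : ¬ G.Reachable x y := by
    intro hr
    obtain ⟨a, b, hab⟩ := not_reachable_of_disc hd
    have ha : G.Reachable x a := by
      rcases hreach a with h | h
      · exact h
      · exact hr.trans h
    have hb : G.Reachable x b := by
      rcases hreach b with h | h
      · exact h
      · exact hr.trans h
    exact hab (ha.symm.trans hb)
  set Rx : Set V := {z | G.Reachable x z} with hRxdef
  set Ry : Set V := {z | G.Reachable y z} with hRydef
  have hRxc : AdjClosed G Rx := fun a b ha hadj => ha.trans hadj.reachable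
  have hRyc : AdjClosed G Ry := fun a b ha hadj => ha.trans hadj.reachable
  have hdisjRR : ∀ z, z ∈ Rx → z ∈ Ry → False := by
    intro z hz1 hz2
    exact hnxy (hz1.trans hz2.symm)
  have hxRx : x ∈ Rx := SimpleGraph.Reachable.refl x
  have hyRy : y ∈ Ry := SimpleGraph.Reachable.refl y
  have hcard : ∀ t ≤ k, (propSet G ({x, y} : Set V) t).ncard = t + 2 := by
    intro t ht
    have hlow := ncard_propSet_growth hBmin.1 (Nat.zero_le t) (hBptk ▸ ht)
    rw [propSet_zero, hBc] at hlow
    have hup := ncard_propSet_growth hBmin.1 ht (hBptk ▸ le_refl k)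
    have hu2 : propSet G ({x, y} : Set V) k = Set.univ := hBptk ▸ propSet_ptSet hBmin.1
    rw [hu2, Set.ncard_univ] at hup
    omega
  have hsing : Ry = {y} ∨ Rx = {x} := by
    by_cases hk0 : k = 0
    · -- n = 2, V = {x, y}
      left
      have hcard0 := hcard 0 (Nat.zero_le k)
      rw [propSet_zero] at hcard0
      have huniv : ({x, y} : Set V) = Set.univ := by
        apply Set.eq_of_subset_of_ncard_le (Set.subset_univ _)
        rw [Set.ncard_univ, hcard0]; omega
      ext z
      simp only [Set.mem_singleton_iff]
      constructor
      · intro hz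
        have : z ∈ ({x, y} : Set V) := huniv ▸ Set.mem_univ z
        rcases this with rfl | rfl
        · exact absurd (hz : G.Reachable y z).symm hnxy
        · rfl
      · rintro rfl; exact hyRy
    · -- k ≥ 1
      by_contra hcon
      push_neg at hcon
      obtain ⟨hRy, hRx⟩ := hcon
      have hBRx : propSet G ({x, y} : Set V) 0 ∩ Rx = {x} := by
        rw [propSet_zero]
        ext z
        simp only [Set.mem_inter_iff, Set.mem_insert_iff, Set.mem_singleton_iff]
        constructor
        · rintro ⟨rfl | rfl, hz⟩
          · rfl
          · exact absurd ((hz : G.Reachable x z)) hnxy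
        · rintro rfl; exact ⟨Or.inl rfl, hxRx⟩
      have hBRy : propSet G ({x, y} : Set V) 0 ∩ Ry = {y} := by
        rw [propSet_zero]
        ext z
        simp only [Set.mem_inter_iff, Set.mem_insert_iff, Set.mem_singleton_iff]
        constructor
        · rintro ⟨rfl | rfl, hz⟩
          · exact absurd ((hz : G.Reachable y z)).symm hnxy
          · rfl
        · rintro rfl; exact ⟨Or.inr rfl, hyRy⟩
      obtain ⟨wx, hwxU, hwx1, hwx0⟩ := exists_new_in_closed hRxc hBmin.1
        (t := 0) (by rw [hBRx]; exact fun h => hRx h.symm)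
      obtain ⟨wy, hwyU, hwy1, hwy0⟩ := exists_new_in_closed hRyc hBmin.1
        (t := 0) (by rw [hBRy]; exact fun h => hRy h.symm)
      have hwxy : wx ≠ wy := fun h => hdisjRR wx hwxU (h ▸ hwyU)
      have hsub : insert wx (insert wy (propSet G ({x, y} : Set V) 0))
          ⊆ propSet G ({x, y} : Set V) 1 := by
        intro z hz
        rcases hz with rfl | rfl | hz
        · exact hwx1
        · exact hwy1
        · exact propSet_subset_succ 0 hz
      have hc1 : (insert wx (insert wy (propSet G ({x, y} : Set V) 0))).ncard
          = (propSet G ({x, y} : Set V) 0).ncard + 2 := by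
        rw [Set.ncard_insert_of_notMem (by
            rintro (rfl | h)
            · exact hwxy rfl
            · exact hwx0 h) (Set.toFinite _),
          Set.ncard_insert_of_notMem hwy0 (Set.toFinite _)]
      have hle := Set.ncard_le_ncard hsub (Set.toFinite _)
      have h0 := hcard 0 (Nat.zero_le k)
      have h1 := hcard 1 (by omega)
      omega
  rcases hsing with hRy | hRx
  · have hy : ∀ z, ¬ G.Adj y z := by
      intro z hadj
      have : z ∈ Ry := hadj.reachable
      rw [hRy, Set.mem_singleton_iff] at this
      exact G.irrefl (this ▸ hadj)
    exact build_iso hxy hBmin hBptk hkn hy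
  · have hx : ∀ z, ¬ G.Adj x z := by
      intro z hadj
      have : z ∈ Rx := hadj.reachable
      rw [hRx, Set.mem_singleton_iff] at this
      exact G.irrefl (this ▸ hadj)
    have hmin' : IsMinZFSet G {y, x} := by rw [Set.pair_comm]; exact hBmin
    have hpt' : ptSet G {y, x} = k := by rw [Set.pair_comm]; exact hBptk
    exact build_iso hxy.symm hmin' hpt' hkn hx

end Main2

theorem disconnected_pt_tfae' {V : Type*} [Finite V] [Nonempty V] (G : SimpleGraph V)
    (hd : ¬ G.Connected) :
    List.TFAE [ptMin G + 2 = Nat.card V,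
      ptMax G + 2 = Nat.card V,
      Nonempty (G ≃g disjUnion (SimpleGraph.pathGraph (Nat.card V - 1))
        (SimpleGraph.pathGraph 1))] := by
  have hn2 : 2 ≤ Nat.card V := two_le_card hd
  tfae_have 1 → 2
  | h1 => by
    have ha := ptMax_le hd (G := G)
    have hb := ptMin_le_ptMax hd (G := G)
    omega
  tfae_have 2 → 3
  | h2 => by
    obtain ⟨k, hkn, ⟨e⟩⟩ := main23 hd h2
    have h1 : Nat.card V - 1 = k + 1 := by omega
    rw [h1]
    exact ⟨e⟩
  tfae_have 3 → 1
  | ⟨e⟩ => by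
    have h1 : Nat.card V - 1 = (Nat.card V - 2) + 1 := by omega
    rw [h1] at e
    have hm : ptMin (modelG (Nat.card V - 2)) = ptMin G := ptMin_eq e
    rw [modelG_ptMin] at hm
    omega
  tfae_finish

/-- For a disconnected graph `G`, the following are equivalent:
`pt(G) = |G| - 2`; `PT(G) = |G| - 2`; `G = P_{n-1} ∪̇ P_1`. -/
theorem disconnected_pt_tfae {V : Type*} [Finite V] [Nonempty V] (G : SimpleGraph V)
    (hd : ¬ G.Connected) :
    List.TFAE [ptMin G + 2 = Nat.card V,
      ptMax G + 2 = Nat.card V,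
      Nonempty (G ≃g disjUnion (SimpleGraph.pathGraph (Nat.card V - 1))
        (SimpleGraph.pathGraph 1))] := disconnected_pt_tfae' G hd
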